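/- Let L be a positive self-adjoint operator on a Hilbert space H, κ ∈ (0,1], δ ∈ (0, 1/2). Suppose D(L) is dense in the space H^δ (completion of D(L) under ‖L^δ · ‖). Then for every U ∈ H^δ, lim_{t→0} t^{(1−2δ)/(2κ)} ‖L^{1/2} e^{−tL^κ} U‖ = 0. -/

import Mathlib

open MeasureTheory

lemma aux_rpow_exp_le (a : ℝ) (ha : 0 < a) (s : ℝ) (hs : 0 ≤ s) :
    s ^ a * Real.exp (-(2 * s)) ≤ (a / 2) ^ a := by
  have h1 : s ≤ a / 2 * Real.exp (2 * s / a) := by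
    have h := Real.add_one_le_exp (2 * s / a)
    have h2 : 2 * s / a ≤ Real.exp (2 * s / a) := by linarith
    calc s = a / 2 * (2 * s / a) := by field_simp
      _ ≤ a / 2 * Real.exp (2 * s / a) := by
          exact mul_le_mul_of_nonneg_left h2 (by linarith)
  have h2 : s ^ a ≤ (a / 2 * Real.exp (2 * s / a)) ^ a :=
    Real.rpow_le_rpow hs h1 ha.le
  have h3 : (a / 2 * Real.exp (2 * s / a)) ^ a
      = (a / 2) ^ a * Real.exp (2 * s) := by
    rw [Real.mul_rpow (by linarith) (Real.exp_pos _).le, ← Real.exp_mul]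
    congr 2
    field_simp
  have h4 : s ^ a * Real.exp (-(2 * s)) ≤ (a / 2) ^ a * Real.exp (2 * s) * Real.exp (-(2 * s)) := by
    apply mul_le_mul_of_nonneg_right _ (Real.exp_pos _).le
    rw [← h3]; exact h2
  calc s ^ a * Real.exp (-(2 * s)) ≤ (a / 2) ^ a * Real.exp (2 * s) * Real.exp (-(2 * s)) := h4
    _ = (a / 2) ^ a := by rw [mul_assoc, ← Real.exp_add]; simp

/-- For a positive self-adjoint `L`, `κ ∈ (0,1]`, `δ ∈ (0,1/2)` and `U ∈ H^δ`
(the completion of `D(L)` under `‖L^δ ·‖`), one has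
`t^{(1−2δ)/(2κ)} ‖L^{1/2} e^{−tL^κ} U‖ → 0` as `t → 0⁺`; stated in the
multiplication-operator model provided by the spectral theorem: `H = L²(μ)`,
`L` = multiplication by `ℓ ≥ 0`, and `U ∈ H^δ` meaning `∫ ℓ^{2δ} U² < ∞`. -/
theorem stmt_6 {X : Type*} [MeasurableSpace X] (μ : Measure X)
    (ℓ : X → ℝ) (hℓ : ∀ x, 0 ≤ ℓ x) (hℓm : Measurable ℓ)
    (κ δ : ℝ) (hκ0 : 0 < κ) (hκ1 : κ ≤ 1) (hδ0 : 0 < δ) (hδ : δ < 1 / 2)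
    (U : X → ℝ) (hU : Measurable U)
    (hUδ : Integrable (fun x => (ℓ x ^ δ) ^ 2 * U x ^ 2) μ) :
    Filter.Tendsto
      (fun t : ℝ => t ^ ((1 - 2 * δ) / (2 * κ)) *
        Real.sqrt (∫ x, (ℓ x ^ ((1 : ℝ) / 2) * Real.exp (-(t * ℓ x ^ κ))) ^ 2 * U x ^ 2 ∂μ))
      (nhdsWithin 0 (Set.Ioi 0)) (nhds 0) := by
  set a : ℝ := (1 - 2 * δ) / κ with ha_def
  have ha : 0 < a := div_pos (by linarith) hκ0
  set G : ℝ → X → ℝ := fun t x =>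
    t ^ a * ((ℓ x ^ ((1 : ℝ) / 2) * Real.exp (-(t * ℓ x ^ κ))) ^ 2 * U x ^ 2) with hG_def
  -- pointwise rewriting of G for t ≥ 0
  have hGeq : ∀ t : ℝ, 0 ≤ t → ∀ x,
      G t x = ℓ x ^ (2 * δ) *
        ((t * ℓ x ^ κ) ^ a * Real.exp (-(2 * (t * ℓ x ^ κ)))) * U x ^ 2 := by
    intro t ht x
    have hℓx := hℓ x
    have hsq : (ℓ x ^ ((1 : ℝ) / 2)) ^ 2 = ℓ x := by
      rw [← Real.rpow_natCast (ℓ x ^ ((1 : ℝ) / 2)) 2, ← Real.rpow_mul hℓx]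
      norm_num
    have hexp : (Real.exp (-(t * ℓ x ^ κ))) ^ 2 = Real.exp (-(2 * (t * ℓ x ^ κ))) := by
      rw [pow_two, ← Real.exp_add]; ring_nf
    have hmul : (t * ℓ x ^ κ) ^ a = t ^ a * (ℓ x ^ κ) ^ a :=
      Real.mul_rpow ht (Real.rpow_nonneg hℓx κ)
    have hκa : (ℓ x ^ κ) ^ a = ℓ x ^ (1 - 2 * δ) := by
      rw [← Real.rpow_mul hℓx]
      congr 1
      rw [ha_def]; field_simp [hκ0.ne']
    have hsplit : ℓ x ^ (2 * δ) * ℓ x ^ (1 - 2 * δ) = ℓ x := by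
      rw [← Real.rpow_add' hℓx (by norm_num)]
      norm_num
    simp only [hG_def, mul_pow, hsq, hexp, hmul, hκa]
    calc t ^ a * (ℓ x * Real.exp (-(2 * (t * ℓ x ^ κ))) * U x ^ 2)
        = (ℓ x ^ (2 * δ) * ℓ x ^ (1 - 2 * δ)) * (t ^ a * Real.exp (-(2 * (t * ℓ x ^ κ))) * U x ^ 2) := by
          rw [hsplit]; ring
      _ = ℓ x ^ (2 * δ) * (t ^ a * ℓ x ^ (1 - 2 * δ) * Real.exp (-(2 * (t * ℓ x ^ κ)))) * U x ^ 2 := by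
          ring
  -- dominated convergence
  have hInt : Filter.Tendsto (fun t => ∫ x, G t x ∂μ)
      (nhdsWithin 0 (Set.Ioi 0)) (nhds 0) := by
    have key := MeasureTheory.tendsto_integral_filter_of_dominated_convergence
      (μ := μ) (F := G) (f := fun _ => (0 : ℝ))
      (l := nhdsWithin (0:ℝ) (Set.Ioi 0))
      (bound := fun x => (a / 2) ^ a * ((ℓ x ^ δ) ^ 2 * U x ^ 2))
      ?_ ?_ ?_ ?_
    · simpa using key
    · filter_upwards with t
      apply Measurable.aestronglyMeasurable
      fun_prop
    · filter_upwards [self_mem_nhdsWithin] with t (ht : 0 < t)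
      filter_upwards with x
      have hℓx := hℓ x
      have hs : 0 ≤ t * ℓ x ^ κ := mul_nonneg ht.le (Real.rpow_nonneg hℓx κ)
      rw [hGeq t ht.le x]
      have hnn : 0 ≤ ℓ x ^ (2 * δ) *
          ((t * ℓ x ^ κ) ^ a * Real.exp (-(2 * (t * ℓ x ^ κ)))) * U x ^ 2 := by
        positivity
      rw [Real.norm_eq_abs, abs_of_nonneg hnn]
      have hb := aux_rpow_exp_le a ha (t * ℓ x ^ κ) hs
      have h2δ : (ℓ x ^ δ) ^ 2 = ℓ x ^ (2 * δ) := by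
        rw [← Real.rpow_natCast (ℓ x ^ δ) 2, ← Real.rpow_mul hℓx]
        norm_num; ring_nf
      rw [h2δ]
      have : ℓ x ^ (2 * δ) * ((t * ℓ x ^ κ) ^ a * Real.exp (-(2 * (t * ℓ x ^ κ))))
          ≤ ℓ x ^ (2 * δ) * (a / 2) ^ a :=
        mul_le_mul_of_nonneg_left hb (Real.rpow_nonneg hℓx _)
      calc ℓ x ^ (2 * δ) * ((t * ℓ x ^ κ) ^ a * Real.exp (-(2 * (t * ℓ x ^ κ)))) * U x ^ 2
          ≤ ℓ x ^ (2 * δ) * (a / 2) ^ a * U x ^ 2 :=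
            mul_le_mul_of_nonneg_right this (sq_nonneg _)
        _ = (a / 2) ^ a * (ℓ x ^ (2 * δ) * U x ^ 2) := by ring
    · exact hUδ.const_mul _
    · filter_upwards with x
      have : ContinuousAt (fun t : ℝ => G t x) 0 := by
        apply ContinuousAt.mul
        · exact Real.continuousAt_rpow_const 0 a (Or.inr ha.le)
        · fun_prop
      have h0 : G 0 x = 0 := by
        simp only [hG_def]
        rw [Real.zero_rpow ha.ne', zero_mul]
      have := this.tendsto
      rw [h0] at this
      exact this.mono_left nhdsWithin_le_nhds
  -- identify the original function with sqrt ∘ (∫ G)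
  have hsqrt : Filter.Tendsto (fun t => Real.sqrt (∫ x, G t x ∂μ))
      (nhdsWithin 0 (Set.Ioi 0)) (nhds 0) := by
    have := (Real.continuous_sqrt.tendsto 0).comp hInt
    simpa [Function.comp_def] using this
  apply hsqrt.congr'
  filter_upwards [self_mem_nhdsWithin] with t (ht : 0 < t)
  have hIG : (∫ x, G t x ∂μ) =
      t ^ a * ∫ x, (ℓ x ^ ((1 : ℝ) / 2) * Real.exp (-(t * ℓ x ^ κ))) ^ 2 * U x ^ 2 ∂μ := by
    simp only [hG_def]
    exact MeasureTheory.integral_const_mul _ _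
  rw [hIG, Real.sqrt_mul (Real.rpow_nonneg ht.le a)]
  congr 1
  rw [Real.sqrt_eq_rpow, ← Real.rpow_mul ht.le]
  congr 1
  rw [ha_def, div_mul_div_comm, mul_one, mul_comm κ 2]
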